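/- Define σ^GHZ_{a,b|x,y} := (1/8)[ I + ((−1)^b/√2)( Z + x (−1)^{a+y} X ) ] for a, b, x, y ∈ {0,1}. Then (i) σ^GHZ admits an LHS model (a finite set Λ, weights P_λ ≥ 0 summing to 1, density matrices ϱ_λ, and conditional distributions P(a,b|x,y,λ) with σ^GHZ_{a,b|x,y} = ∑_λ P_λ P(a,b|x,y,λ) ϱ_λ); yet (ii) the wired assemblage τ_{b|x} := ∑_a σ^GHZ_{a,b|x,a} produces, under Charlie's measurements M_{c|0} = (I + (−1)^c (2Z+X)/√5)/2 and M_{c|1} = (I + (−1)^c X)/2, a behavior P(b,c|x,z) = Tr[τ_{b|x} M_{c|z}] whose correlators E(x,z) = ∑_{b,c}(−1)^{b+c}P(b,c|x,z) satisfy E(0,0) − E(0,1) + E(1,0) + E(1,1) = (√5+1)/√2 > 2. Thus a tripartite assemblage admitting an LHS model is mapped by a bilocal wiring to a Bell-nonlocal bipartite assemblage (super-exposure of Bell nonlocality). -/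

import Mathlib

open Matrix BigOperators ComplexOrder

noncomputable section

/-- Pauli X matrix. -/
def X : Matrix (Fin 2) (Fin 2) ℂ := !![0, 1; 1, 0]

/-- Pauli Z matrix. -/
def Z : Matrix (Fin 2) (Fin 2) ℂ := !![1, 0; 0, -1]

/-- The GHZ assemblage σ^GHZ_{a,b|x,y}. -/
def σGHZ : Fin 2 → Fin 2 → Fin 2 → Fin 2 → Matrix (Fin 2) (Fin 2) ℂ := fun a b x y =>
  (1 / 8 : ℝ) • ((1 : Matrix (Fin 2) (Fin 2) ℂ) +
    ((-1 : ℝ) ^ (b : ℕ) / Real.sqrt 2) •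
      (Z + (((x : ℕ) : ℝ) * (-1 : ℝ) ^ ((a : ℕ) + (y : ℕ))) • X))

/-- A tripartite family `σ a b x y` of 2×2 complex matrices admits an LHS model. -/
def IsLHS3 (σ : Fin 2 → Fin 2 → Fin 2 → Fin 2 → Matrix (Fin 2) (Fin 2) ℂ) : Prop :=
  ∃ (n : ℕ) (P : Fin n → ℝ) (ϱ : Fin n → Matrix (Fin 2) (Fin 2) ℂ)
    (q : Fin 2 → Fin 2 → Fin 2 → Fin 2 → Fin n → ℝ),
    (∀ l, 0 ≤ P l) ∧ (∑ l, P l = 1) ∧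
    (∀ l, (ϱ l).PosSemidef) ∧ (∀ l, (ϱ l).trace = 1) ∧
    (∀ a b x y l, 0 ≤ q a b x y l) ∧
    (∀ x y l, ∑ a, ∑ b, q a b x y l = 1) ∧
    (∀ a b x y, σ a b x y = ∑ l, (P l * q a b x y l) • ϱ l)

/-- The wired bipartite assemblage τ_{b|x} = ∑_a σ^GHZ_{a,b|x,a}. -/
def τ : Fin 2 → Fin 2 → Matrix (Fin 2) (Fin 2) ℂ := fun b x =>
  ∑ a : Fin 2, σGHZ a b x a

/-- Charlie's measurement operators: the (2Z+X)/√5 basis for z = 0, the X basis for z = 1. -/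
def Mc : Fin 2 → Fin 2 → Matrix (Fin 2) (Fin 2) ℂ := fun c z =>
  if z = 0 then
    (1 / 2 : ℝ) • ((1 : Matrix (Fin 2) (Fin 2) ℂ) +
      ((-1 : ℝ) ^ (c : ℕ) / Real.sqrt 5) • ((2 : ℝ) • Z + X))
  else
    (1 / 2 : ℝ) • ((1 : Matrix (Fin 2) (Fin 2) ℂ) + ((-1 : ℝ) ^ (c : ℕ)) • X)

/-- The behavior obtained from the wired assemblage by Charlie's measurements. -/
def Pbeh (b c x z : Fin 2) : ℂ := (τ b x * Mc c z).trace

/-- The correlators of the behavior. -/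
def E (x z : Fin 2) : ℂ :=
  ∑ b : Fin 2, ∑ c : Fin 2, (-1 : ℂ) ^ ((b : ℕ) + (c : ℕ)) * Pbeh b c x z

/-! ### Auxiliary machinery -/

/-- hidden states of the LHS model -/
def ρst (e s : ℝ) : Matrix (Fin 2) (Fin 2) ℂ :=
  (1/2 : ℝ) • (1 + (e / Real.sqrt 2) • (Z + s • X))

def c1 : ℝ := Real.sqrt ((2 + Real.sqrt 2)/4)
def c2 : ℝ := Real.sqrt ((2 - Real.sqrt 2)/4)

lemma sqrt2_sq : Real.sqrt 2 * Real.sqrt 2 = 2 := Real.mul_self_sqrt (by norm_num)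
lemma sqrt2_le : Real.sqrt 2 ≤ 2 := by
  nlinarith [sqrt2_sq, Real.sqrt_nonneg 2]
lemma c1_sq : c1 * c1 = (2 + Real.sqrt 2)/4 :=
  Real.mul_self_sqrt (by positivity)
lemma c2_sq : c2 * c2 = (2 - Real.sqrt 2)/4 :=
  Real.mul_self_sqrt (by nlinarith [sqrt2_le])
lemma c1c2 : c1 * c2 = Real.sqrt 2 / 4 := by
  rw [c1, c2, ← Real.sqrt_mul (by positivity)]
  rw [show ((2 + Real.sqrt 2)/4 * ((2 - Real.sqrt 2)/4)) = (Real.sqrt 2 / 4)^2 by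
    have := sqrt2_sq; nlinarith]
  exact Real.sqrt_sq (by positivity)

lemma ρst_psd (e s : ℝ) (he : e = 1 ∨ e = -1) (hs : s = 1 ∨ s = -1) :
    (ρst e s).PosSemidef := by
  have h2 := sqrt2_sq
  have h2' : Real.sqrt 2 ≠ 0 := by positivity
  have hc1 := c1_sq; have hc2 := c2_sq; have hc12 := c1c2
  have key : ∀ v0 v1 : ℝ, v0 * v0 = (1/2)*(1 + e/Real.sqrt 2) →
      v1 * v1 = (1/2)*(1 - e/Real.sqrt 2) → v0 * v1 = (1/2)*(e*s/Real.sqrt 2) →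
      (ρst e s).PosSemidef := by
    intro v0 v1 h00 h11 h01
    have hm : ρst e s = (!![(v0:ℂ), (v1:ℂ)] : Matrix (Fin 1) (Fin 2) ℂ)ᴴ * !![(v0:ℂ), (v1:ℂ)] := by
      ext i j
      fin_cases i <;> fin_cases j <;>
        simp [ρst, X, Z, Matrix.mul_apply, Matrix.one_apply, Matrix.conjTranspose_apply,
          Fin.sum_univ_one] <;> push_cast <;>
      [ (rw [show ((v0:ℂ))*v0 = ((v0*v0 : ℝ) : ℂ) by push_cast; ring, h00]);
        (rw [show ((v0:ℂ))*v1 = ((v0*v1 : ℝ) : ℂ) by push_cast; ring, h01]);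
        (rw [show ((v1:ℂ))*v0 = ((v0*v1 : ℝ) : ℂ) by push_cast; ring, h01]);
        (rw [show ((v1:ℂ))*v1 = ((v1*v1 : ℝ) : ℂ) by push_cast; ring, h11]) ] <;>
      push_cast <;> ring
    rw [hm]
    exact Matrix.posSemidef_conjTranspose_mul_self _
  rcases he with rfl | rfl <;> rcases hs with rfl | rfl
  · exact key c1 c2 (by rw [hc1]; field_simp; linarith) (by rw [hc2]; field_simp; linarith)
      (by rw [hc12]; field_simp; linarith)
  · exact key c1 (-c2) (by rw [hc1]; field_simp; linarith)
      (by rw [show -c2 * -c2 = c2*c2 by ring, hc2]; field_simp; linarith)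
      (by rw [show c1 * -c2 = -(c1*c2) by ring, hc12]; field_simp; linarith)
  · exact key c2 (-c1) (by rw [hc2]; field_simp; linarith)
      (by rw [show -c1 * -c1 = c1*c1 by ring, hc1]; field_simp; linarith)
      (by rw [show c2 * -c1 = -(c1*c2) by ring, hc12]; field_simp; linarith)
  · exact key c2 c1 (by rw [hc2]; field_simp; linarith) (by rw [hc1]; field_simp; linarith)
      (by rw [show c2 * c1 = c1*c2 by ring, hc12]; field_simp; linarith)

lemma ρst_tr (e s : ℝ) : (ρst e s).trace = 1 := by
  simp [ρst, X, Z, Matrix.trace_fin_two, Matrix.one_apply]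

/-- the hidden-state assignment -/
def ϱv : Fin 4 → Matrix (Fin 2) (Fin 2) ℂ := ![ρst 1 1, ρst 1 (-1), ρst (-1) 1, ρst (-1) (-1)]

/-- the local response functions -/
def qv : Fin 2 → Fin 2 → Fin 2 → Fin 2 → Fin 4 → ℝ :=
  fun a b x y l => if x = 0 then (if (l:ℕ)/2 = (b:ℕ) then 1/2 else 0)
      else (if (l:ℕ)/2 = (b:ℕ) ∧ (l:ℕ)%2 = ((a:ℕ)+(y:ℕ))%2 then 1 else 0)

set_option maxHeartbeats 4000000 in
lemma main_eq (a b x y : Fin 2) :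
    σGHZ a b x y = ∑ l, ((1/4 : ℝ) * qv a b x y l) • ϱv l := by
  fin_cases a <;> fin_cases b <;> fin_cases x <;> fin_cases y <;>
    (rw [Fin.sum_univ_four]
     norm_num [qv, ϱv, show ((0:Fin 4):ℕ) = 0 from rfl, show ((1:Fin 4):ℕ) = 1 from rfl,
       show ((2:Fin 4):ℕ) = 2 from rfl, show ((3:Fin 4):ℕ) = 3 from rfl,
       show ((0:Fin 2):ℕ) = 0 from rfl, show ((1:Fin 2):ℕ) = 1 from rfl]
     ext i j
     fin_cases i <;> fin_cases j <;>
       simp [σGHZ, ρst, X, Z, Matrix.one_apply] <;> push_cast <;> ring_nf)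

lemma lhs_model : IsLHS3 σGHZ := by
  refine ⟨4, fun _ => 1/4, ϱv, qv, fun l => by norm_num,
    by simp [Fin.sum_univ_four]; try norm_num, ?_, ?_, ?_, ?_, main_eq⟩
  · intro l
    fin_cases l
    · exact ρst_psd 1 1 (by norm_num) (by norm_num)
    · exact ρst_psd 1 (-1) (by norm_num) (by norm_num)
    · exact ρst_psd (-1) 1 (by norm_num) (by norm_num)
    · exact ρst_psd (-1) (-1) (by norm_num) (by norm_num)
  · intro l
    fin_cases l <;> exact ρst_tr _ _
  · intro a b x y l
    rw [qv]
    split_ifs <;> norm_num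
  · intro x y l
    fin_cases x <;> fin_cases y <;> fin_cases l <;>
      simp [qv, Fin.sum_univ_two] <;> decide

/-! ### Computation of the wired behavior -/

local notation "r2" => (Real.sqrt 2 : ℂ)
local notation "r5" => (Real.sqrt 5 : ℂ)

lemma tau00 : τ 0 0 = !![(1/4:ℂ)*(1+1/r2), 0; 0, (1/4:ℂ)*(1-1/r2)] := by
  ext i j
  fin_cases i <;> fin_cases j <;>
    simp [τ, σGHZ, X, Z, Fin.sum_univ_two, Matrix.one_apply] <;> ring

lemma tau10 : τ 1 0 = !![(1/4:ℂ)*(1-1/r2), 0; 0, (1/4:ℂ)*(1+1/r2)] := by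
  ext i j
  fin_cases i <;> fin_cases j <;>
    simp [τ, σGHZ, X, Z, Fin.sum_univ_two, Matrix.one_apply] <;> ring

lemma tau01 : τ 0 1 = !![(1/4:ℂ)*(1+1/r2), (1/4:ℂ)*(1/r2); (1/4:ℂ)*(1/r2), (1/4:ℂ)*(1-1/r2)] := by
  ext i j
  fin_cases i <;> fin_cases j <;>
    simp [τ, σGHZ, X, Z, Fin.sum_univ_two, Matrix.one_apply] <;> ring

lemma tau11 : τ 1 1 = !![(1/4:ℂ)*(1-1/r2), (1/4:ℂ)*(-1/r2); (1/4:ℂ)*(-1/r2), (1/4:ℂ)*(1+1/r2)] := by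
  ext i j
  fin_cases i <;> fin_cases j <;>
    simp [τ, σGHZ, X, Z, Fin.sum_univ_two, Matrix.one_apply] <;> ring

lemma mc (c : Fin 2) : Mc c 0 = !![(1/2:ℂ)*(1+(-1:ℂ)^(c:ℕ)*2/r5), (1/2:ℂ)*((-1:ℂ)^(c:ℕ)/r5); (1/2:ℂ)*((-1:ℂ)^(c:ℕ)/r5), (1/2:ℂ)*(1-(-1:ℂ)^(c:ℕ)*2/r5)] ∧
    Mc c 1 = !![(1/2:ℂ), (1/2:ℂ)*(-1:ℂ)^(c:ℕ); (1/2:ℂ)*(-1:ℂ)^(c:ℕ), (1/2:ℂ)] := by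
  constructor <;> (ext i j; fin_cases c <;> fin_cases i <;> fin_cases j <;>
    simp [Mc, X, Z, Matrix.one_apply] <;> ring)

set_option maxHeartbeats 1000000 in
lemma chsh_value : E 0 0 - E 0 1 + E 1 0 + E 1 1 = (((Real.sqrt 5 + 1) / Real.sqrt 2 : ℝ) : ℂ) := by
  have h2 : r2 * r2 = 2 := by norm_cast; rw [Real.mul_self_sqrt] <;> norm_num
  have h5 : r5 * r5 = 5 := by norm_cast; rw [Real.mul_self_sqrt] <;> norm_num
  have h2' : r2 ≠ 0 := by norm_cast; positivity
  have h5' : r5 ≠ 0 := by norm_cast; positivity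
  simp only [E, Pbeh, Fin.sum_univ_two, tau00, tau10, tau01, tau11,
    (mc 0).1, (mc 0).2, (mc 1).1, (mc 1).2, Matrix.trace_fin_two, Matrix.mul_apply,
    Matrix.of_apply, Matrix.cons_val', Matrix.cons_val_zero, Matrix.cons_val_one,
    Matrix.head_cons, Matrix.head_fin_const, Matrix.empty_val', Matrix.cons_val_fin_one]
  simp only [Fin.val_zero, Fin.val_one, pow_zero, pow_one, zero_mul, one_mul]
  push_cast
  field_simp
  ring_nf
  linear_combination (-8:ℂ) * h5

/-- Super-exposure of Bell nonlocality: the GHZ assemblage admits an LHS model, yet the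
bilocal wiring y = a maps it to a bipartite assemblage whose behavior under Charlie's
measurements violates the CHSH inequality. -/
theorem super_exposure_of_bell_nonlocality :
    IsLHS3 σGHZ ∧
    E 0 0 - E 0 1 + E 1 0 + E 1 1 = (((Real.sqrt 5 + 1) / Real.sqrt 2 : ℝ) : ℂ) ∧
    (2 : ℝ) < (Real.sqrt 5 + 1) / Real.sqrt 2 := by
  refine ⟨lhs_model, chsh_value, ?_⟩
  have h2 : Real.sqrt 2 * Real.sqrt 2 = 2 := Real.mul_self_sqrt (by norm_num)
  have h5 : Real.sqrt 5 * Real.sqrt 5 = 5 := Real.mul_self_sqrt (by norm_num)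
  have hp : (0:ℝ) < Real.sqrt 2 := Real.sqrt_pos.mpr (by norm_num)
  rw [lt_div_iff₀ hp]
  nlinarith [Real.sqrt_nonneg 5, Real.sqrt_nonneg 2, sq_nonneg (Real.sqrt 5 - 2),
    sq_nonneg (Real.sqrt 2 - 1)]
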